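/- Let G be a group, H a subgroup of G, and N a finite normal subgroup of G. Let K = { h ∈ H : ∀ x ∈ N, h⁻¹ x h = x } be the kernel of the conjugation action of H on N. Then K has finite index in H, and K ≤ H ∩ g⁻¹ H g for every g ∈ N provided K ≤ H. In particular, if for every g ∉ H the intersection H ∩ g⁻¹ H g is finite and H is infinite, then N ≤ H. -/

import Mathlib

/-- Let `N` be a finite normal subgroup of `G` and `H ≤ G`. The kernel `K` of
the conjugation action of `H` on `N` has finite index in `H`, and
`K ≤ H ∩ g⁻¹Hg` for every `g ∈ N`. In particular, if `H` is infinite and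
`H ∩ g⁻¹Hg` is finite for every `g ∉ H`, then `N ≤ H`. -/
theorem finite_normal_subgroup_le_almost_malnormal {G : Type*} [Group G]
    (H N : Subgroup G) (hNn : N.Normal) (hNfin : (N : Set G).Finite) :
    ∃ K : Subgroup G,
      (K : Set G) = {h : G | h ∈ H ∧ ∀ x ∈ N, h⁻¹ * x * h = x} ∧
      (K.subgroupOf H).FiniteIndex ∧
      (∀ g ∈ N, ∀ k ∈ K, k ∈ H ∧ g * k * g⁻¹ ∈ H) ∧
      ((∀ g : G, g ∉ H → {x : G | x ∈ H ∧ g * x * g⁻¹ ∈ H}.Finite) →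
        (H : Set G).Infinite → N ≤ H) := by
  haveI := hNn
  haveI : Finite ↥N := hNfin.to_subtype
  haveI : Finite (MulAut ↥N) :=
    Finite.of_injective (fun e => (e : ↥N → ↥N)) DFunLike.coe_injective
  set K : Subgroup G := H ⊓ Subgroup.centralizer (N : Set G) with hK
  have hKmem : ∀ h : G, h ∈ K ↔ h ∈ H ∧ ∀ x ∈ N, h⁻¹ * x * h = x := by
    intro h
    simp only [hK, Subgroup.mem_inf, Subgroup.mem_centralizer_iff]
    constructor
    · rintro ⟨h1, h2⟩
      refine ⟨h1, fun x hx => ?_⟩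
      have hxh := h2 x hx
      rw [mul_assoc, hxh]
      group
    · rintro ⟨h1, h2⟩
      refine ⟨h1, fun x hx => ?_⟩
      have hxh := h2 x hx
      calc x * h = h * (h⁻¹ * x * h) := by group
        _ = h * x := by rw [hxh]
  -- the key claim: K pulled back to H is the kernel of the conjugation action on N
  have hker : K.subgroupOf H = ((MulAut.conjNormal (H := N)).comp H.subtype).ker := by
    ext ⟨h, hh⟩
    simp only [Subgroup.mem_subgroupOf, MonoidHom.mem_ker, hKmem]
    constructor
    · rintro ⟨-, h2⟩
      ext x
      simp only [MulAut.conjNormal_apply, MonoidHom.comp_apply, Subgroup.coe_subtype,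
        MulAut.one_apply]
      have hxh := h2 x x.2
      calc h * ↑x * h⁻¹ = h * (h⁻¹ * ↑x * h) * h⁻¹ := by rw [hxh]
        _ = ↑x := by group
    · intro he
      refine ⟨hh, fun x hx => ?_⟩
      have hxh := congrArg (fun e => ((e ⟨x, hx⟩ : ↥N) : G)) he
      simp only [MulAut.conjNormal_apply, MonoidHom.comp_apply, Subgroup.coe_subtype,
        MulAut.one_apply] at hxh
      calc h⁻¹ * x * h = h⁻¹ * (h * x * h⁻¹) * h := by rw [hxh]
        _ = x := by group
  haveI hFI : (K.subgroupOf H).FiniteIndex := by rw [hker]; infer_instance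
  have hconj : ∀ g ∈ N, ∀ k, k ∈ H → (∀ x ∈ N, k⁻¹ * x * k = x) → g * k * g⁻¹ = k := by
    intro g hg k _ hc
    have h2 : k⁻¹ * g * k = g := hc g hg
    have hcomm : g * k = k * g := by
      calc g * k = k * (k⁻¹ * g * k) := by group
        _ = k * g := by rw [h2]
    calc g * k * g⁻¹ = k * g * g⁻¹ := by rw [hcomm]
      _ = k := by group
  refine ⟨K, ?_, hFI, ?_, ?_⟩
  · ext h; exact hKmem h
  · intro g hg k hk
    rw [hKmem] at hk
    obtain ⟨hkH, hc⟩ := hk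
    refine ⟨hkH, ?_⟩
    rw [hconj g hg k hkH hc]
    exact hkH
  · intro halm hinf g hg
    by_contra hgH
    have hsub : (K : Set G) ⊆ {x : G | x ∈ H ∧ g * x * g⁻¹ ∈ H} := by
      intro k hk
      rw [SetLike.mem_coe, hKmem] at hk
      obtain ⟨hkH, hc⟩ := hk
      refine ⟨hkH, ?_⟩
      rw [hconj g hg k hkH hc]
      exact hkH
    have hKfin : (K : Set G).Finite := (halm g hgH).subset hsub
    haveI : Finite ↥K := hKfin.to_subtype
    haveI : Finite ↥(K.subgroupOf H) :=
      Finite.of_injective (fun x : ↥(K.subgroupOf H) => (⟨(x : ↥H), x.2⟩ : ↥K))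
        (fun a b hab => by
          apply Subtype.ext
          exact congrArg (fun y : ↥K => (y : G)) hab |>.trans rfl |> fun h =>
            Subtype.ext h)
    haveI : Finite (H ⧸ K.subgroupOf H) := Subgroup.finite_quotient_of_finiteIndex
    have : Finite ↥H :=
      Finite.of_equiv _ (Subgroup.groupEquivQuotientProdSubgroup (s := K.subgroupOf H)).symm
    exact hinf (Set.toFinite _)
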